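/- For every n×n complex matrix D, the time-averaged state converges to Ψ(D): as T → ∞, (1/T)·∫₀ᵀ exp(itA) · D · exp(−itA) dt tends to Σ_{r=1}^d E_r D E_r. -/

import Mathlib

open Matrix BigOperators MeasureTheory Filter Topology

lemma pow_sum_smul_idem {n d : ℕ} (F : Fin d → Matrix (Fin n) (Fin n) ℂ)
    (hidem : ∀ r, F r * F r = F r)
    (horth : ∀ r s, r ≠ s → F r * F s = 0)
    (hsum : ∑ r, F r = 1) (c : Fin d → ℂ) (k : ℕ) :
    (∑ r, c r • F r) ^ k = ∑ r, (c r) ^ k • F r := by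
  induction k with
  | zero => simpa using hsum.symm
  | succ k ih =>
    rw [pow_succ, ih, Finset.sum_mul]
    refine Finset.sum_congr rfl fun r _ => ?_
    rw [Finset.mul_sum, Finset.sum_eq_single r]
    · rw [smul_mul_smul_comm, hidem r, ← pow_succ]
    · intro s _ hs
      rw [smul_mul_smul_comm, horth r s (Ne.symm hs), smul_zero]
    · simp

lemma exp_sum_smul_idem {n d : ℕ} (F : Fin d → Matrix (Fin n) (Fin n) ℂ)
    (hidem : ∀ r, F r * F r = F r)
    (horth : ∀ r s, r ≠ s → F r * F s = 0)
    (hsum : ∑ r, F r = 1) (c : Fin d → ℂ) :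
    NormedSpace.exp (∑ r, c r • F r) = ∑ r, Complex.exp (c r) • F r := by
  letI : SeminormedRing (Matrix (Fin n) (Fin n) ℂ) := Matrix.linftyOpSemiNormedRing
  letI : NormedRing (Matrix (Fin n) (Fin n) ℂ) := Matrix.linftyOpNormedRing
  letI : NormedAlgebra ℂ (Matrix (Fin n) (Fin n) ℂ) := Matrix.linftyOpNormedAlgebra
  rw [NormedSpace.exp_eq_tsum (𝕂 := ℂ)]
  have hsm : ∀ r : Fin d, Summable fun k : ℕ => ((k.factorial : ℂ)⁻¹ • c r ^ k) • F r :=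
    fun r => (NormedSpace.expSeries_summable' (𝕂 := ℂ) (c r)).smul_const (F r)
  calc (∑' k : ℕ, (k.factorial : ℂ)⁻¹ • (∑ r, c r • F r) ^ k)
      = ∑' k : ℕ, ∑ r, ((k.factorial : ℂ)⁻¹ • c r ^ k) • F r := by
        refine tsum_congr fun k => ?_
        rw [pow_sum_smul_idem F hidem horth hsum, Finset.smul_sum]
        simp_rw [smul_smul, smul_eq_mul]
    _ = ∑ r, ∑' k : ℕ, ((k.factorial : ℂ)⁻¹ • c r ^ k) • F r :=
        Summable.tsum_finsetSum fun r _ => hsm r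
    _ = ∑ r, Complex.exp (c r) • F r := by
        refine Finset.sum_congr rfl fun r _ => ?_
        rw [Summable.tsum_smul_const (NormedSpace.expSeries_summable' (𝕂 := ℂ) (c r)),
          Complex.exp_eq_exp_ℂ, NormedSpace.exp_eq_tsum (𝕂 := ℂ)]

lemma avg_exp_tendsto (l : ℝ) :
    Tendsto (fun T : ℝ => (1 / (T : ℂ)) * ∫ t in (0:ℝ)..T, Complex.exp ((Complex.I * l) * t))
      atTop (𝓝 (if l = 0 then 1 else 0)) := by
  by_cases hl : l = 0
  · rw [if_pos hl]
    refine Tendsto.congr' ?_ (tendsto_const_nhds : Tendsto (fun _ : ℝ => (1:ℂ)) atTop (𝓝 1))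
    filter_upwards [eventually_gt_atTop (0:ℝ)] with T hT
    subst hl
    have hTne : (T:ℂ) ≠ 0 := by exact_mod_cast hT.ne'
    simp only [Complex.ofReal_zero, mul_zero, zero_mul, Complex.exp_zero,
      intervalIntegral.integral_const, sub_zero, Complex.real_smul, mul_one, one_div]
    rw [inv_mul_cancel₀ hTne]
  · rw [if_neg hl]
    have hc : (Complex.I * l) ≠ 0 := by
      simp [Complex.I_ne_zero, Complex.ofReal_eq_zero, hl]
    have habs : ∀ T : ℝ, ‖Complex.exp (Complex.I * l * T)‖ = 1 := by
      intro T
      rw [Complex.norm_exp]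
      have : (Complex.I * l * T).re = 0 := by simp [Complex.mul_re]
      rw [this, Real.exp_zero]
    have hg : Tendsto (fun T : ℝ => 2 / ‖(Complex.I * (l:ℂ))‖ / T) atTop (𝓝 0) :=
      tendsto_const_nhds.div_atTop tendsto_id
    refine squeeze_zero_norm' ?_ hg
    filter_upwards [eventually_ge_atTop (1:ℝ)] with T hT
    have hT0 : (0:ℝ) < T := lt_of_lt_of_le one_pos hT
    rw [integral_exp_mul_complex hc]
    have h1 : ‖Complex.exp (Complex.I * l * T) - Complex.exp (Complex.I * l * 0)‖ ≤ 2 := by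
      refine (norm_sub_le _ _).trans ?_
      rw [habs]
      have h0 := habs 0
      rw [Complex.ofReal_zero] at h0
      rw [h0]; norm_num
    calc ‖1 / (T:ℂ) * ((Complex.exp (Complex.I * l * T) - Complex.exp (Complex.I * l * 0)) / (Complex.I * l))‖
        = 1/T * (‖Complex.exp (Complex.I * l * T) - Complex.exp (Complex.I * l * 0)‖ / ‖(Complex.I * (l:ℂ))‖) := by
          rw [norm_mul, norm_div, norm_div, norm_one, Complex.norm_real, Real.norm_eq_abs,
            abs_of_pos hT0]
        _ ≤ 1/T * (2 / ‖(Complex.I * (l:ℂ))‖) := by gcongr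
        _ = 2 / ‖(Complex.I * (l:ℂ))‖ / T := by ring

theorem average_state_tendsto (n d : ℕ) (hn : 1 ≤ n)
    (A : Matrix (Fin n) (Fin n) ℝ) (hA : Aᵀ = A)
    (θ : Fin d → ℝ) (hθ : Function.Injective θ)
    (E : Fin d → Matrix (Fin n) (Fin n) ℝ)
    (hEsymm : ∀ r, (E r)ᵀ = E r)
    (hEidem : ∀ r, E r * E r = E r)
    (hEorth : ∀ r s, r ≠ s → E r * E s = 0)
    (hEsum : ∑ r, E r = 1)
    (hdecomp : A = ∑ r, θ r • E r)
    (D : Matrix (Fin n) (Fin n) ℂ) (a b : Fin n) :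
    Tendsto
      (fun T : ℝ => (1 / (T : ℂ)) *
        ∫ t in (0 : ℝ)..T,
          (NormedSpace.exp ((Complex.I * (t : ℂ)) • A.map (Complex.ofReal)) * D *
            NormedSpace.exp ((-(Complex.I * (t : ℂ))) • A.map (Complex.ofReal))) a b)
      atTop
      (𝓝 ((∑ r, (E r).map (Complex.ofReal) * D * (E r).map (Complex.ofReal)) a b)) := by
  set Fc : Fin d → Matrix (Fin n) (Fin n) ℂ := fun r => (E r).map Complex.ofReal with hFc
  have hmapmul : ∀ M N : Matrix (Fin n) (Fin n) ℝ,
      (M * N).map Complex.ofReal = M.map Complex.ofReal * N.map Complex.ofReal := by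
    intro M N; ext i j
    simp only [Matrix.map_apply, Matrix.mul_apply]
    push_cast
    rfl
  have hFidem : ∀ r, Fc r * Fc r = Fc r := fun r => by
    rw [hFc]; simp only; rw [← hmapmul, hEidem]
  have hForth : ∀ r s, r ≠ s → Fc r * Fc s = 0 := fun r s h => by
    rw [hFc]; simp only; rw [← hmapmul, hEorth r s h]
    ext i j; simp [Matrix.map_apply]
  have hFsum : ∑ r, Fc r = 1 := by
    ext i j
    have h2 := congrFun (congrFun hEsum i) j
    simp only [Matrix.sum_apply, Matrix.one_apply] at h2 ⊢
    simp only [hFc, Matrix.map_apply]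
    rw [← Complex.ofReal_sum, h2]
    split_ifs <;> simp
  have hAc : A.map Complex.ofReal = ∑ r, ((θ r : ℂ)) • Fc r := by
    ext i j
    rw [hdecomp]
    simp only [Matrix.map_apply, Matrix.sum_apply, Matrix.smul_apply, smul_eq_mul, hFc]
    push_cast
    rfl
  have hU : ∀ t : ℝ, NormedSpace.exp ((Complex.I * (t : ℂ)) • A.map Complex.ofReal)
      = ∑ r, Complex.exp (Complex.I * (t : ℂ) * (θ r : ℂ)) • Fc r := by
    intro t
    rw [hAc, Finset.smul_sum]
    simp_rw [smul_smul]
    exact exp_sum_smul_idem Fc hFidem hForth hFsum _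
  have hV : ∀ t : ℝ, NormedSpace.exp ((-(Complex.I * (t : ℂ))) • A.map Complex.ofReal)
      = ∑ s, Complex.exp (-(Complex.I * (t : ℂ) * (θ s : ℂ))) • Fc s := by
    intro t
    rw [hAc, Finset.smul_sum]
    simp_rw [smul_smul, neg_mul]
    exact exp_sum_smul_idem Fc hFidem hForth hFsum _
  have hent : ∀ t : ℝ,
      (NormedSpace.exp ((Complex.I * (t : ℂ)) • A.map Complex.ofReal) * D *
        NormedSpace.exp ((-(Complex.I * (t : ℂ))) • A.map Complex.ofReal)) a b
      = ∑ p : Fin d × Fin d,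
          Complex.exp (Complex.I * ((θ p.1 - θ p.2 : ℝ) : ℂ) * (t : ℂ)) *
            ((Fc p.1 * D * Fc p.2) a b) := by
    intro t
    rw [hU t, hV t, Fintype.sum_prod_type]
    simp only [Finset.sum_mul, Finset.mul_sum, smul_mul_assoc, Matrix.sum_apply,
      mul_smul_comm, smul_smul, Matrix.smul_apply, smul_eq_mul]
    rw [Finset.sum_comm]
    refine Finset.sum_congr rfl fun r _ => Finset.sum_congr rfl fun s _ => ?_
    rw [← mul_assoc, ← Complex.exp_add]
    have harg : (-(Complex.I * (t:ℂ) * (θ s : ℂ)) + Complex.I * (t:ℂ) * (θ r : ℂ))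
        = Complex.I * ((θ r - θ s : ℝ) : ℂ) * (t:ℂ) := by push_cast; ring
    rw [harg]
  have hintg : ∀ (p : Fin d × Fin d) (T : ℝ),
      IntervalIntegrable
        (fun t : ℝ => Complex.exp (Complex.I * ((θ p.1 - θ p.2 : ℝ) : ℂ) * (t : ℂ)) *
          ((Fc p.1 * D * Fc p.2) a b)) volume 0 T := by
    intro p T
    exact ((Complex.continuous_exp.comp
      (continuous_const.mul Complex.continuous_ofReal)).mul continuous_const).intervalIntegrable _ _
  have key : ∀ T : ℝ, (1 / (T : ℂ)) *
      (∫ t in (0 : ℝ)..T,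
        (NormedSpace.exp ((Complex.I * (t : ℂ)) • A.map Complex.ofReal) * D *
          NormedSpace.exp ((-(Complex.I * (t : ℂ))) • A.map Complex.ofReal)) a b)
      = ∑ p : Fin d × Fin d,
          ((1 / (T : ℂ)) * ∫ t in (0 : ℝ)..T,
            Complex.exp (Complex.I * ((θ p.1 - θ p.2 : ℝ) : ℂ) * (t : ℂ))) *
            ((Fc p.1 * D * Fc p.2) a b) := by
    intro T
    simp only [hent]
    rw [intervalIntegral.integral_finset_sum (fun p _ => hintg p T), Finset.mul_sum]
    refine Finset.sum_congr rfl fun p _ => ?_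
    rw [intervalIntegral.integral_mul_const, ← mul_assoc]
  have htarget : (∑ r, (E r).map Complex.ofReal * D * (E r).map Complex.ofReal) a b
      = ∑ p : Fin d × Fin d,
          (if (θ p.1 - θ p.2 : ℝ) = 0 then (1 : ℂ) else 0) * ((Fc p.1 * D * Fc p.2) a b) := by
    rw [Fintype.sum_prod_type, Matrix.sum_apply]
    refine Finset.sum_congr rfl fun r _ => ?_
    rw [Finset.sum_eq_single r]
    · simp [hFc]
    · intro s _ hs
      rw [if_neg (sub_ne_zero.mpr fun h => hs (hθ h).symm), zero_mul]
    · simp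
  rw [htarget]
  refine Tendsto.congr (fun T => (key T).symm) ?_
  exact tendsto_finset_sum _ fun p _ => (avg_exp_tendsto (θ p.1 - θ p.2)).mul_const _
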